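/- Suppose there exists an integer t₀ ≥ 1 with q_{t₀} = c and t₀ + s ≤ T. Then t₀ + s minimizes f_{(s,0)} over {s + 1, …, T}: for every integer t with s + 1 ≤ t ≤ T, f_{(s,0)}(t₀ + s) ≤ f_{(s,0)}(t). -/

import Mathlib

open MeasureTheory ProbabilityTheory Real

private lemma dsum_eq (θ β : ℝ) (hβ : β ≠ 0) :
    ∀ τ : ℕ, 1 ≤ τ →
    (∑ k ∈ Finset.Icc 1 τ,
        (Real.exp (-θ * ((k : ℝ) - 1) ^ β) - Real.exp (-θ * (k : ℝ) ^ β)) * (k : ℝ))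
      + Real.exp (-θ * (τ : ℝ) ^ β) * (τ : ℝ)
    = ∑ u ∈ Finset.range τ, Real.exp (-θ * (u : ℝ) ^ β) := by
  intro τ hτ
  induction τ with
  | zero => omega
  | succ n ih =>
    rcases Nat.eq_zero_or_pos n with hn | hn
    · subst hn
      simp [Real.zero_rpow hβ]
    · have ihn := ih hn
      rw [Finset.sum_Icc_succ_top (by omega : 1 ≤ n + 1), Finset.sum_range_succ]
      push_cast
      have hcast : ((n : ℝ) + 1 - 1) = (n : ℝ) := by ring
      rw [hcast]
      push_cast at ihn
      linear_combination ihn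

theorem age_zero_optimal_time
    {Ω : Type*} [MeasureSpace Ω] [IsProbabilityMeasure (ℙ : Measure Ω)]
    (θ β g h m : ℝ) (hθ : 0 < θ) (hβ : 1 < β) (hg : 0 ≤ g) (hh : 0 ≤ h) (hm : 0 ≤ m)
    (L : Ω → ℕ) (hmeasL : Measurable L) (hposL : ∀ ω, 1 ≤ L ω)
    (hsurvL : ∀ u : ℕ, ℙ {ω | u < L ω} = ENNReal.ofReal (Real.exp (-θ * (u : ℝ) ^ β)))
    (q : ℕ → ℝ)
    (hq : ∀ t : ℕ, 1 ≤ t →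
      q t = ((1 - Real.exp (-θ * (t : ℝ) ^ β)) * g
            + Real.exp (-θ * (t : ℝ) ^ β) * (h + m * t))
          / ((∑ k ∈ Finset.Icc 1 t,
              (Real.exp (-θ * ((k : ℝ) - 1) ^ β) - Real.exp (-θ * (k : ℝ) ^ β)) * (k : ℝ))
            + Real.exp (-θ * (t : ℝ) ^ β) * (t : ℝ)))
    (c : ℝ) (hc : c = ⨅ t : ℕ, q (t + 1))
    (T s : ℕ) (hT : 1 ≤ T) (hsT : s < T)
    (Q : ℕ → ℝ → ℝ)
    (hQ : ∀ t : ℕ, s + 1 ≤ t → t ≤ T → ∀ u : ℝ,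
      Q t u = if u ≤ (t : ℝ) then g + ((T : ℝ) - u) * c
              else h + ((t : ℝ) - (s : ℝ)) * m + ((T : ℝ) - (t : ℝ)) * c)
    (f : ℕ → ℝ)
    (hf : ∀ t : ℕ, f t = ∫ ω, Q t ((s : ℝ) + (L ω : ℝ)) ∂ℙ)
    (t₀ : ℕ) (ht₀ : 1 ≤ t₀) (hqt₀ : q t₀ = c) (ht₀T : t₀ + s ≤ T) :
    ∀ t : ℕ, s + 1 ≤ t → t ≤ T → f (t₀ + s) ≤ f t := by
  intro t hts htT
  -- abbreviations
  set S : ℕ → ℝ := fun u => Real.exp (-θ * (u : ℝ) ^ β) with hSdef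
  set E : ℕ → ℝ := fun τ => ∑ u ∈ Finset.range τ, S u with hEdef
  set N : ℕ → ℝ := fun n => (1 - S n) * g + S n * (h + m * n) with hNdef
  have hSpos : ∀ u, 0 < S u := fun u => Real.exp_pos _
  have hSle1 : ∀ u : ℕ, S u ≤ 1 := by
    intro u
    rw [hSdef]
    have h1 : (0:ℝ) ≤ (u:ℝ) ^ β := Real.rpow_nonneg (by positivity) _
    have : -θ * (u:ℝ) ^ β ≤ 0 := by nlinarith
    simpa using Real.exp_le_one_iff.mpr this
  have hEpos : ∀ τ, 1 ≤ τ → 0 < E τ := by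
    intro τ hτ
    rw [hEdef]
    exact Finset.sum_pos (fun u _ => hSpos u) (by simp [Finset.nonempty_range_iff]; omega)
  have hNnn : ∀ n, 0 ≤ N n := by
    intro n
    simp only [hNdef]
    have h1 := hSpos n
    have h2 := hSle1 n
    have h3 : (0:ℝ) ≤ h + m * n := by positivity
    nlinarith
  have hqN : ∀ n, 1 ≤ n → q n = N n / E n := by
    intro n hn
    rw [hq n hn, dsum_eq θ β (by linarith) n hn]
  have hcq : ∀ n, 1 ≤ n → c ≤ q n := by
    intro n hn
    rw [hc]
    have hb : BddBelow (Set.range fun k : ℕ => q (k + 1)) := by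
      refine ⟨0, ?_⟩
      rintro x ⟨k, rfl⟩
      show (0:ℝ) ≤ q (k + 1)
      rw [hqN (k+1) (by omega)]
      exact div_nonneg (hNnn _) (hEpos _ (by omega)).le
    have h2 := ciInf_le hb (n - 1)
    simpa [Nat.sub_add_cancel hn] using h2
  -- integral of indicators
  have hmeasSet : ∀ n : ℕ, MeasurableSet {ω | n < L ω} := fun n => hmeasL measurableSet_Ioi
  have hint : ∀ (n : ℕ) (a : ℝ),
      ∫ ω, Set.indicator {ω' | n < L ω'} (fun _ => a) ω ∂(ℙ : Measure Ω) = S n * a := by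
    intro n a
    rw [MeasureTheory.integral_indicator_const a (hmeasSet n), measureReal_def, hsurvL n,
      ENNReal.toReal_ofReal (Real.exp_pos _).le, smul_eq_mul]
  have hintg : ∀ (n : ℕ) (a : ℝ),
      Integrable (fun ω => Set.indicator {ω' | n < L ω'} (fun _ => a) ω) (ℙ : Measure Ω) :=
    fun n a => (integrable_const a).indicator (hmeasSet n)
  -- key formula for f
  have key : ∀ u : ℕ, s + 1 ≤ u → u ≤ T →
      f u = (g + ((T:ℝ) - s) * c)
        + ((∑ k ∈ Finset.range (u - s), S k * (-c))
          + S (u-s) * (h + ((u-s : ℕ):ℝ) * m - g)) := by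
    intro u hu1 hu2
    have hτ1 : 1 ≤ u - s := by omega
    set τ := u - s with hτdef
    have hcast : (u:ℝ) = (s:ℝ) + (τ:ℝ) := by
      have : u = s + τ := by omega
      rw [this]; push_cast; ring
    have hpt : ∀ ω, Q u ((s:ℝ) + (L ω : ℝ)) =
        (g + ((T:ℝ) - s) * c)
        + ((∑ k ∈ Finset.range τ, Set.indicator {ω' | k < L ω'} (fun _ => (-c)) ω)
          + Set.indicator {ω' | τ < L ω'} (fun _ => h + (τ:ℝ) * m - g) ω) := by
      intro ω
      have hsum : ∑ k ∈ Finset.range τ, Set.indicator {ω' | k < L ω'} (fun _ => (-c)) ω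
          = ((min (L ω) τ : ℕ) : ℝ) * (-c) := by
        have hfilter : (Finset.range τ).filter (fun k => k < L ω)
            = Finset.range (min (L ω) τ) := by
          ext k; simp [Nat.lt_min, and_comm]
        calc ∑ k ∈ Finset.range τ, Set.indicator {ω' | k < L ω'} (fun _ => (-c)) ω
            = ∑ k ∈ Finset.range τ, if k < L ω then (-c) else 0 := by
              refine Finset.sum_congr rfl fun k _ => ?_
              by_cases hk : k < L ω <;> simp [Set.indicator, hk]
          _ = _ := by
              rw [Finset.sum_ite, Finset.sum_const, Finset.sum_const_zero, hfilter]
              simp [Finset.card_range, mul_comm]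
      rw [hQ u hu1 hu2]
      by_cases hcase : L ω ≤ τ
      · have hle : (s:ℝ) + (L ω : ℝ) ≤ (u:ℝ) := by
          rw [hcast]
          have : ((L ω : ℕ):ℝ) ≤ (τ:ℝ) := by exact_mod_cast hcase
          linarith
        rw [if_pos hle, hsum, min_eq_left hcase]
        have hind : Set.indicator {ω' | τ < L ω'} (fun _ => h + (τ:ℝ)*m - g) ω = 0 := by
          simp only [Set.indicator_apply, Set.mem_setOf_eq]
          rw [if_neg (by omega)]
        rw [hind]; ring
      · push_neg at hcase
        have hlt : ¬ ((s:ℝ) + (L ω:ℝ) ≤ (u:ℝ)) := by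
          rw [hcast]; push_neg
          have : (τ:ℝ) < (L ω:ℝ) := by exact_mod_cast hcase
          linarith
        rw [if_neg hlt, hsum, min_eq_right hcase.le]
        have hind : Set.indicator {ω' | τ < L ω'} (fun _ => h+(τ:ℝ)*m-g) ω
            = h+(τ:ℝ)*m-g := by
          simp only [Set.indicator_apply, Set.mem_setOf_eq]
          rw [if_pos hcase]
        rw [hind, hcast]; ring
    have hI1 : Integrable (fun ω : Ω => ∑ k ∈ Finset.range τ,
        Set.indicator {ω' | k < L ω'} (fun _ => (-c)) ω) (ℙ : Measure Ω) :=
      integrable_finset_sum _ fun k _ => hintg k (-c)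
    have hI2 : Integrable (fun ω : Ω =>
        (∑ k ∈ Finset.range τ, Set.indicator {ω' | k < L ω'} (fun _ => (-c)) ω)
        + Set.indicator {ω' | τ < L ω'} (fun _ => h + (τ:ℝ) * m - g) ω) (ℙ : Measure Ω) :=
      hI1.add (hintg τ _)
    rw [hf u, show (fun ω => Q u ((s:ℝ) + (L ω : ℝ))) = _ from funext hpt]
    rw [integral_add (integrable_const _) hI2]
    rw [integral_add hI1 (hintg τ _)]
    rw [integral_finset_sum _ fun k _ => hintg k (-c)]
    simp only [hint]
    rw [integral_const]
    simp [measure_univ]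
  -- conclude
  have hf_t := key t hts htT
  have hf_t0 := key (t₀ + s) (by omega) ht₀T
  have ht0s : t₀ + s - s = t₀ := by omega
  rw [ht0s] at hf_t0
  set τ := t - s with hτ
  have hτ1 : 1 ≤ τ := by omega
  have hsumE : ∀ n : ℕ, ∑ k ∈ Finset.range n, S k * (-c) = -(c * E n) := by
    intro n
    rw [hEdef, Finset.mul_sum]
    simp [mul_comm]
  have hexpand : ∀ n : ℕ, S n * (h + (n:ℝ) * m - g) = N n - g := by
    intro n; rw [hNdef]; ring
  have hNE0 : N t₀ = c * E t₀ := by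
    have h1 := hqN t₀ ht₀
    rw [hqt₀] at h1
    exact (div_eq_iff (hEpos t₀ ht₀).ne').mp h1.symm
  have hNE1 : c * E τ ≤ N τ := by
    have h1 := hcq τ hτ1
    rw [hqN τ hτ1] at h1
    exact (le_div_iff₀ (hEpos τ hτ1)).mp h1
  rw [hf_t, hf_t0, hsumE, hsumE, hexpand, hexpand]
  linarith
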